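/- (Flow decomposition equivalence of objective values) For an acyclic network, any nonnegative arc flow φ satisfying flow conservation at all intermediate nodes (with total flow z from v⁺ to v⁻) can be decomposed into a nonnegative path flow λ on source-sink paths such that φ_{(u,v)} = Σ_{p ∋ (u,v)} λ_p for each arc; under this decomposition, Σ_{(u,v)∈A} c_{(u,v)} φ_{(u,v)} = Σ_p c_p λ_p and Σ_{(u,v)∈A} a_{(u,v)} φ_{(u,v)} = Σ_p a_p λ_p. Hence the LP relaxations of the arc flow model and the path flow model have the same optimal value. -/

import Mathlib

/-- `IsPath A u p v` : `p` is a list of consecutive arcs of `A` from `u` to `v`. -/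
def IsPath {V : Type*} (A : Finset (V × V)) : V → List (V × V) → V → Prop
  | u, [], v => u = v
  | u, e :: rest, v => e.1 = u ∧ e ∈ A ∧ IsPath A e.2 rest v
section Helpers
set_option linter.unusedSectionVars false
variable {V : Type*} [DecidableEq V] {A : Finset (V × V)} {f : V → ℕ}

lemma isPath_append : ∀ {p : List (V × V)} {u v w : V} {q : List (V × V)},
    IsPath A u p v → IsPath A v q w → IsPath A u (p ++ q) w := by
  intro p
  induction p with
  | nil => intro u v w q h1 h2; simp only [IsPath] at h1; subst h1; simpa using h2
  | cons e rest ih =>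
    intro u v w q h1 h2
    obtain ⟨h1a, h1b, h1c⟩ := h1
    exact ⟨h1a, h1b, ih h1c h2⟩

lemma isPath_mem_A : ∀ {p : List (V × V)} {u v : V}, IsPath A u p v → ∀ e ∈ p, e ∈ A := by
  intro p
  induction p with
  | nil => simp
  | cons e rest ih =>
    intro u v h e' he'
    obtain ⟨_, hb, hc⟩ := h
    rcases List.mem_cons.1 he' with rfl | h'
    · exact hb
    · exact ih hc e' h'

lemma isPath_f_le (hacyc : ∀ e ∈ A, f e.1 < f e.2) :
    ∀ {p : List (V × V)} {u v : V}, IsPath A u p v → f u ≤ f v := by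
  intro p
  induction p with
  | nil => intro u v h; simp only [IsPath] at h; subst h; exact le_rfl
  | cons e rest ih =>
    intro u v h
    obtain ⟨ha, hb, hc⟩ := h
    subst ha
    have h1 := hacyc e hb
    have h2 := ih hc
    omega

lemma isPath_f_le_fst (hacyc : ∀ e ∈ A, f e.1 < f e.2) :
    ∀ {p : List (V × V)} {u v : V}, IsPath A u p v → ∀ e ∈ p, f u ≤ f e.1 := by
  intro p
  induction p with
  | nil => simp
  | cons e rest ih =>
    intro u v h e' he'
    obtain ⟨ha, hb, hc⟩ := h
    subst ha
    rcases List.mem_cons.1 he' with rfl | h'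
    · exact le_rfl
    · have h1 := hacyc e hb
      have h2 := ih hc e' h'
      omega

lemma isPath_nodup (hacyc : ∀ e ∈ A, f e.1 < f e.2) :
    ∀ {p : List (V × V)} {u v : V}, IsPath A u p v → p.Nodup := by
  intro p
  induction p with
  | nil => simp
  | cons e rest ih =>
    intro u v h
    obtain ⟨ha, hb, hc⟩ := h
    refine List.nodup_cons.2 ⟨fun hmem => ?_, ih hc⟩
    have h1 := isPath_f_le_fst hacyc hc e hmem
    have h2 := hacyc e hb
    omega

lemma sum_count (s : Finset (V × V)) :
    ∀ p : List (V × V), ∑ e ∈ s, p.count e = p.countP (fun e => decide (e ∈ s)) := by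
  intro p
  induction p with
  | nil => simp
  | cons x p ih =>
    simp only [List.count_cons, List.countP_cons]
    rw [Finset.sum_add_distrib, ih]
    congr 1
    simp only [beq_iff_eq]
    rw [Finset.sum_ite_eq s x (fun _ => 1)]
    simp

lemma path_balance : ∀ {p : List (V × V)} {u v : V}, IsPath A u p v → ∀ w : V,
    p.countP (fun e => decide (e.2 = w)) + (if u = w then 1 else 0)
      = p.countP (fun e => decide (e.1 = w)) + (if v = w then 1 else 0) := by
  intro p
  induction p with
  | nil => intro u v h w; simp only [IsPath] at h; subst h; simp
  | cons e rest ih =>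
    intro u v h w
    obtain ⟨ha, hb, hc⟩ := h
    subst ha
    have H := ih hc w
    simp only [List.countP_cons, decide_eq_true_eq]
    split_ifs at H ⊢ <;> omega

lemma sum_mul_count (g : V × V → ℝ) (s : Finset (V × V)) :
    ∀ p : List (V × V), (∀ e ∈ p, e ∈ s) →
      ∑ e ∈ s, g e * (p.count e : ℝ) = (p.map g).sum := by
  intro p
  induction p with
  | nil => simp
  | cons x p ih =>
    intro hmem
    have hx : x ∈ s := hmem x List.mem_cons_self
    simp only [List.count_cons, List.map_cons, List.sum_cons, beq_iff_eq]
    push_cast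
    simp only [mul_add, Finset.sum_add_distrib, mul_ite, mul_one, mul_zero]
    rw [ih (fun e he => hmem e (List.mem_cons_of_mem _ he)), Finset.sum_ite_eq s x g]
    simp [hx]
    ring

end Helpers

section Paths
variable {V : Type*} [Fintype V] [DecidableEq V]

lemma forward_path (A : Finset (V × V)) (vplus vminus : V) (f : V → ℕ)
    (hacyc : ∀ e ∈ A, f e.1 < f e.2) (hs : ∀ e ∈ A, e.2 ≠ vplus)
    (φ : V × V → ℝ) (hφ : ∀ e, 0 ≤ φ e)
    (hcons : ∀ v : V, v ≠ vplus → v ≠ vminus →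
      ∑ e ∈ A.filter (fun e => e.2 = v), φ e = ∑ e ∈ A.filter (fun e => e.1 = v), φ e) :
    ∀ n (v : V), Finset.univ.sup f + 1 - f v ≤ n →
      (∃ e ∈ A, e.2 = v ∧ 0 < φ e) →
      ∃ p, IsPath A v p vminus ∧ ∀ e ∈ p, 0 < φ e := by
  intro n
  induction n with
  | zero =>
    intro v hv _
    exact absurd hv (by have := Finset.le_sup (f := f) (Finset.mem_univ v); omega)
  | succ n ih =>
    rintro v hv ⟨e, heA, he2, hepos⟩
    by_cases hvm : v = vminus
    · exact ⟨[], by simp only [IsPath, hvm], by simp⟩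
    · have hvp : v ≠ vplus := he2 ▸ hs e heA
      have hin : 0 < ∑ e' ∈ A.filter (fun e' => e'.2 = v), φ e' := by
        have hmem : e ∈ A.filter (fun e' => e'.2 = v) := by
          simp [Finset.mem_filter, heA, he2]
        calc (0:ℝ) < φ e := hepos
          _ ≤ _ := Finset.single_le_sum (fun i _ => hφ i) hmem
      rw [hcons v hvp hvm] at hin
      obtain ⟨e', he', hpos'⟩ : ∃ e' ∈ A.filter (fun e' => e'.1 = v), 0 < φ e' := by
        by_contra hcon
        push_neg at hcon
        have : ∑ e' ∈ A.filter (fun e' => e'.1 = v), φ e' ≤ 0 :=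
          Finset.sum_nonpos fun i hi => not_lt.1 (by exact fun h => absurd h (not_lt.2 (hcon i hi)))
        linarith
      obtain ⟨he'A, he'1⟩ := Finset.mem_filter.1 he'
      have hf : f v < f e'.2 := he'1 ▸ hacyc e' he'A
      have hle : f e'.2 ≤ Finset.univ.sup f := Finset.le_sup (Finset.mem_univ e'.2)
      obtain ⟨p, hp, hppos⟩ := ih e'.2 (by omega) ⟨e', he'A, rfl, hpos'⟩
      refine ⟨e' :: p, ⟨he'1, he'A, hp⟩, ?_⟩
      intro x hx
      rcases List.mem_cons.1 hx with rfl | hx'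
      · exact hpos'
      · exact hppos x hx'

lemma backward_path (A : Finset (V × V)) (vplus vminus : V) (f : V → ℕ)
    (hacyc : ∀ e ∈ A, f e.1 < f e.2) (ht : ∀ e ∈ A, e.1 ≠ vminus)
    (φ : V × V → ℝ) (hφ : ∀ e, 0 ≤ φ e)
    (hcons : ∀ v : V, v ≠ vplus → v ≠ vminus →
      ∑ e ∈ A.filter (fun e => e.2 = v), φ e = ∑ e ∈ A.filter (fun e => e.1 = v), φ e) :
    ∀ n (v : V), f v < n →
      (∃ e ∈ A, e.1 = v ∧ 0 < φ e) →
      ∃ p, IsPath A vplus p v ∧ ∀ e ∈ p, 0 < φ e := by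
  intro n
  induction n with
  | zero => omega
  | succ n ih =>
    rintro v hv ⟨e, heA, he1, hepos⟩
    by_cases hvp : v = vplus
    · exact ⟨[], by simp only [IsPath, hvp], by simp⟩
    · have hvm : v ≠ vminus := he1 ▸ ht e heA
      have hout : 0 < ∑ e' ∈ A.filter (fun e' => e'.1 = v), φ e' := by
        have hmem : e ∈ A.filter (fun e' => e'.1 = v) := by
          simp [Finset.mem_filter, heA, he1]
        calc (0:ℝ) < φ e := hepos
          _ ≤ _ := Finset.single_le_sum (fun i _ => hφ i) hmem
      rw [← hcons v hvp hvm] at hout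
      obtain ⟨e', he', hpos'⟩ : ∃ e' ∈ A.filter (fun e' => e'.2 = v), 0 < φ e' := by
        by_contra hcon
        push_neg at hcon
        have : ∑ e' ∈ A.filter (fun e' => e'.2 = v), φ e' ≤ 0 :=
          Finset.sum_nonpos fun i hi => not_lt.1 (by exact fun h => absurd h (not_lt.2 (hcon i hi)))
        linarith
      obtain ⟨he'A, he'2⟩ := Finset.mem_filter.1 he'
      have hf : f e'.1 < f v := he'2 ▸ hacyc e' he'A
      obtain ⟨p, hp, hppos⟩ := ih e'.1 (by omega) ⟨e', he'A, rfl, hpos'⟩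
      refine ⟨p ++ [e'], isPath_append hp ⟨rfl, he'A, by simp only [IsPath, he'2]⟩, ?_⟩
      intro x hx
      rcases List.mem_append.1 hx with hx' | hx'
      · exact hppos x hx'
      · rcases List.mem_singleton.1 hx' with rfl
        exact hpos'

end Paths

section Decomp
variable {V : Type*} [Fintype V] [DecidableEq V]

lemma decompose (A : Finset (V × V)) (vplus vminus : V) (f : V → ℕ)
    (hacyc : ∀ e ∈ A, f e.1 < f e.2)
    (hs : ∀ e ∈ A, e.2 ≠ vplus) (ht : ∀ e ∈ A, e.1 ≠ vminus) :
    ∀ n (φ : V × V → ℝ), (A.filter fun e => φ e ≠ 0).card ≤ n →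
      (∀ e, 0 ≤ φ e) → (∀ e ∉ A, φ e = 0) →
      (∀ v : V, v ≠ vplus → v ≠ vminus →
        ∑ e ∈ A.filter (fun e => e.2 = v), φ e = ∑ e ∈ A.filter (fun e => e.1 = v), φ e) →
      ∃ lam : (List (V × V)) →₀ ℝ,
        (∀ p, 0 ≤ lam p) ∧
        (∀ p ∈ lam.support, IsPath A vplus p vminus) ∧
        (∀ e ∈ A, φ e = lam.sum fun p x => x * (p.count e : ℝ)) ∧
        (∀ g : V × V → ℝ, ∑ e ∈ A, g e * φ e = lam.sum fun p x => x * (p.map g).sum) := by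
  have base : ∀ φ : V × V → ℝ, (∀ e ∈ A, φ e = 0) →
      ∃ lam : (List (V × V)) →₀ ℝ,
        (∀ p, 0 ≤ lam p) ∧
        (∀ p ∈ lam.support, IsPath A vplus p vminus) ∧
        (∀ e ∈ A, φ e = lam.sum fun p x => x * (p.count e : ℝ)) ∧
        (∀ g : V × V → ℝ, ∑ e ∈ A, g e * φ e = lam.sum fun p x => x * (p.map g).sum) := by
    intro φ h0
    refine ⟨0, by simp, by simp, fun e he => by simp [h0 e he], fun g => ?_⟩
    rw [Finset.sum_eq_zero fun e he => by rw [h0 e he, mul_zero]]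
    simp
  intro n
  induction n with
  | zero =>
    intro φ hcard hφ hsupp hcons
    refine base φ fun e he => ?_
    by_contra hne
    have : e ∈ A.filter fun e => φ e ≠ 0 := Finset.mem_filter.2 ⟨he, hne⟩
    have := Finset.card_pos.2 ⟨e, this⟩
    omega
  | succ n ih =>
    intro φ hcard hφ hsupp hcons
    by_cases hex : ∃ e ∈ A, φ e ≠ 0
    swap
    · push_neg at hex
      exact base φ hex
    obtain ⟨e0, he0A, he0ne⟩ := hex
    have he0pos : 0 < φ e0 := lt_of_le_of_ne (hφ e0) (Ne.symm he0ne)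
    -- build a source-sink path through e0
    obtain ⟨pf, hpf, hpfpos⟩ := forward_path A vplus vminus f hacyc hs φ hφ hcons
      (Finset.univ.sup f + 1 - f e0.2) e0.2 le_rfl ⟨e0, he0A, rfl, he0pos⟩
    obtain ⟨pb, hpb, hpbpos⟩ := backward_path A vplus vminus f hacyc ht φ hφ hcons
      (f e0.1 + 1) e0.1 (by omega) ⟨e0, he0A, rfl, he0pos⟩
    set p : List (V × V) := pb ++ e0 :: pf with hp_def
    have hp : IsPath A vplus p vminus := isPath_append hpb ⟨rfl, he0A, hpf⟩
    have he0p : e0 ∈ p := by simp [hp_def]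
    have hppos : ∀ e ∈ p, 0 < φ e := by
      intro e he
      rcases List.mem_append.1 he with h' | h'
      · exact hpbpos e h'
      · rcases List.mem_cons.1 h' with rfl | h''
        · exact he0pos
        · exact hpfpos e h''
    have hpA : ∀ e ∈ p, e ∈ A := isPath_mem_A hp
    have hnodup : p.Nodup := isPath_nodup hacyc hp
    have hEq : (instBEqProd : BEq (V × V)) = instBEqOfDecidableEq := by
      have h1 : @LawfulBEq (V × V) instBEqProd := inferInstance
      have h2 : @LawfulBEq (V × V) instBEqOfDecidableEq :=
        inferInstance
      exact @lawful_beq_subsingleton _ _ _ h1 h2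
    have hcount1 : ∀ e, p.count e ≤ 1 := by
      exact List.nodup_iff_count_le_one.1 hnodup
    -- δ = min flow on p
    have hTne : p.toFinset.Nonempty := ⟨e0, List.mem_toFinset.2 he0p⟩
    set δ : ℝ := p.toFinset.inf' hTne φ with hδ_def
    have hδle : ∀ e ∈ p, δ ≤ φ e := fun e he => Finset.inf'_le φ (List.mem_toFinset.2 he)
    obtain ⟨e1, he1T, he1eq⟩ := Finset.exists_mem_eq_inf' hTne φ
    have he1p : e1 ∈ p := List.mem_toFinset.1 he1T
    have hδpos : 0 < δ := by rw [hδ_def, he1eq]; exact hppos e1 he1p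
    -- reduced flow
    set φ' : V × V → ℝ := fun e => φ e - δ * (p.count e : ℝ) with hφ'_def
    have hcnt_mem : ∀ e ∈ p, p.count e = 1 := fun e he =>
      le_antisymm (hcount1 e) (List.count_pos_iff.2 he)
    have hcnt_nmem : ∀ e ∉ p, p.count e = 0 := fun e he => List.count_eq_zero.2 he
    have hφ'0 : ∀ e, 0 ≤ φ' e := by
      intro e
      by_cases he : e ∈ p
      · simp only [hφ'_def, hcnt_mem e he]
        have := hδle e he; push_cast; linarith
      · simp only [hφ'_def, hcnt_nmem e he]
        have := hφ e; push_cast; linarith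
    have hφ'supp : ∀ e ∉ A, φ' e = 0 := by
      intro e he
      have hnp : e ∉ p := fun h => he (hpA e h)
      simp [hφ'_def, hcnt_nmem e hnp, hsupp e he]
    have key : ∀ s : Finset (V × V), ∑ e ∈ s, φ' e
        = ∑ e ∈ s, φ e - δ * ((∑ e ∈ s, p.count e : ℕ) : ℝ) := by
      intro s
      simp only [hφ'_def, Finset.sum_sub_distrib, ← Finset.mul_sum]
      push_cast
      ring
    have hφ'cons : ∀ v : V, v ≠ vplus → v ≠ vminus →
        ∑ e ∈ A.filter (fun e => e.2 = v), φ' e = ∑ e ∈ A.filter (fun e => e.1 = v), φ' e := by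
      intro v hv1 hv2
      rw [key, key, hcons v hv1 hv2, sum_count, sum_count]
      have hbal := path_balance hp v
      rw [if_neg (by exact fun h => hv1 h.symm), if_neg (by exact fun h => hv2 h.symm)] at hbal
      have hc2 : (p.countP fun e => decide (e ∈ A.filter (fun e => e.2 = v)))
          = p.countP fun e => decide (e.2 = v) := by
        apply List.countP_congr
        intro e he
        simp [Finset.mem_filter, hpA e he]
      have hc1 : (p.countP fun e => decide (e ∈ A.filter (fun e => e.1 = v)))
          = p.countP fun e => decide (e.1 = v) := by
        apply List.countP_congr
        intro e he
        simp [Finset.mem_filter, hpA e he]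
      rw [hc2, hc1]
      have hcc : (p.countP fun e => decide (e.2 = v)) = p.countP fun e => decide (e.1 = v) := by
        omega
      rw [hcc]
    -- strict decrease of support
    have hsubset : (A.filter fun e => φ' e ≠ 0) ⊆ A.filter fun e => φ e ≠ 0 := by
      intro e he
      obtain ⟨heA, hne⟩ := Finset.mem_filter.1 he
      refine Finset.mem_filter.2 ⟨heA, fun h0 => hne ?_⟩
      have hnp : e ∉ p := fun hmem => (ne_of_gt (hppos e hmem)) h0
      simp [hφ'_def, hcnt_nmem e hnp, h0]
    have he1A : e1 ∈ A := hpA e1 he1p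
    have he1S : e1 ∈ A.filter fun e => φ e ≠ 0 :=
      Finset.mem_filter.2 ⟨he1A, ne_of_gt (hppos e1 he1p)⟩
    have he1notS' : e1 ∉ (A.filter fun e => φ' e ≠ 0) := by
      simp only [Finset.mem_filter, not_and, not_not]
      intro _
      rw [hφ'_def]
      simp only [hcnt_mem e1 he1p]
      rw [hδ_def, he1eq]
      push_cast
      ring
    have hlt : (A.filter fun e => φ' e ≠ 0).card < (A.filter fun e => φ e ≠ 0).card :=
      Finset.card_lt_card (Finset.ssubset_iff_of_subset hsubset |>.2 ⟨e1, he1S, he1notS'⟩)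
    obtain ⟨lam', h1, h2, h3, h4⟩ := ih φ' (by omega) hφ'0 hφ'supp hφ'cons
    refine ⟨lam' + Finsupp.single p δ, ?_, ?_, ?_, ?_⟩
    · intro q
      rw [Finsupp.add_apply]
      refine add_nonneg (h1 q) ?_
      rw [Finsupp.single_apply]
      split
      · exact le_of_lt hδpos
      · exact le_rfl
    · intro q hq
      rcases Finset.mem_union.1 (Finsupp.support_add hq) with h | h
      · exact h2 q h
      · have hq' := Finsupp.support_single_subset h
        rw [Finset.mem_singleton] at hq'
        subst hq'
        exact hp
    · intro e heA
      rw [Finsupp.sum_add_index' (fun (a : List (V × V)) => zero_mul ((a.count e : ℕ) : ℝ))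
          (fun a b1 b2 => add_mul b1 b2 ((a.count e : ℕ) : ℝ)),
        Finsupp.sum_single_index
          (h := fun (a : List (V × V)) (x : ℝ) => x * ((a.count e : ℕ) : ℝ)) (zero_mul _),
        ← h3 e heA]
      simp only [hφ'_def]
      ring
    · intro g
      rw [Finsupp.sum_add_index' (fun (a : List (V × V)) => zero_mul (a.map g).sum)
          (fun a b1 b2 => add_mul b1 b2 (a.map g).sum),
        Finsupp.sum_single_index
          (h := fun (a : List (V × V)) (x : ℝ) => x * (a.map g).sum) (zero_mul _),
        ← h4 g, ← sum_mul_count g A p hpA,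
        Finset.mul_sum, ← Finset.sum_add_distrib]
      apply Finset.sum_congr rfl
      intro e _
      simp only [hφ'_def]
      ring
end Decomp

lemma cast_map_sum {V : Type*} (c : V × V → ℤ) (p : List (V × V)) :
    (((p.map c).sum : ℤ) : ℝ) = (p.map fun e => (c e : ℝ)).sum := by
  induction p with
  | nil => simp
  | cons x p ih => push_cast [List.map_cons, List.sum_cons, ← ih]; ring

/-- Flow decomposition: a nonnegative conservative arc flow on an acyclic source-sink network
decomposes into a nonnegative path flow with the same arc usage, objective value, and
constraint contributions. -/
theorem stmt_11 {V : Type*} [Fintype V] [DecidableEq V] (A : Finset (V × V)) (m : ℕ)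
    (c : V × V → ℤ) (a : V × V → Fin m → ℤ)
    (vplus vminus : V)
    (f : V → ℕ) (hacyc : ∀ e ∈ A, f e.1 < f e.2)
    (hs : ∀ e ∈ A, e.2 ≠ vplus) (ht : ∀ e ∈ A, e.1 ≠ vminus)
    (φ : V × V → ℝ) (hφ : ∀ e, 0 ≤ φ e) (hsupp : ∀ e ∉ A, φ e = 0)
    (hcons : ∀ v : V, v ≠ vplus → v ≠ vminus →
      ∑ e ∈ A.filter (fun e => e.2 = v), φ e = ∑ e ∈ A.filter (fun e => e.1 = v), φ e) :
    ∃ lam : (List (V × V)) →₀ ℝ,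
      (∀ p, 0 ≤ lam p) ∧
      (∀ p ∈ lam.support, IsPath A vplus p vminus) ∧
      (∀ e ∈ A, φ e = lam.sum fun p x => x * (p.count e : ℝ)) ∧
      (∑ e ∈ A, (c e : ℝ) * φ e = lam.sum fun p x => x * (((p.map c).sum : ℤ) : ℝ)) ∧
      (∀ k, ∑ e ∈ A, (a e k : ℝ) * φ e =
        lam.sum fun p x => x * (((p.map fun e => a e k).sum : ℤ) : ℝ)) := by
  obtain ⟨lam, h1, h2, h3, h4⟩ := decompose A vplus vminus f hacyc hs ht
    ((A.filter fun e => φ e ≠ 0).card) φ le_rfl hφ hsupp hcons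
  refine ⟨lam, h1, h2, h3, ?_, ?_⟩
  · rw [h4 (fun e => (c e : ℝ))]
    apply Finsupp.sum_congr
    intro q _
    rw [cast_map_sum]
  · intro k
    rw [h4 (fun e => (a e k : ℝ))]
    apply Finsupp.sum_congr
    intro q _
    rw [cast_map_sum]
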